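/- Fix n ≥ 1, ℏ > 0, a symmetric K ∈ M_n(ℂ) and a skew-symmetric J ∈ M_n(ℂ), and set Λ = K + J. For all a, b ∈ ℂⁿ, the multiplicative commutator E(−b) *_Λ E(−a) *_Λ E(b) *_Λ E(a) equals the constant function exp((1/(iℏ))·bJaᵀ). In particular it is a central scalar independent of the expression parameter K. -/

import Mathlib

open Matrix

/-- Partial derivative `∂_{u_i}` of a function on `ℂⁿ`. -/
noncomputable def pd (n : ℕ) (i : Fin n) (f : (Fin n → ℂ) → ℂ) : (Fin n → ℂ) → ℂ :=
  fun u => fderiv ℂ f u (Pi.single i 1)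

/-- Iterated partial derivatives along a list of indices. -/
noncomputable def iterPd (n : ℕ) (l : List (Fin n)) (f : (Fin n → ℂ) → ℂ) :
    (Fin n → ℂ) → ℂ :=
  l.foldr (pd n) f

/-- The `k`-th term of the `Λ`-product series of `f` and `g` at the point `u`. -/
noncomputable def starTerm (ℏ : ℝ) (n : ℕ) (Λ : Matrix (Fin n) (Fin n) ℂ)
    (f g : (Fin n → ℂ) → ℂ) (u : Fin n → ℂ) (k : ℕ) : ℂ :=
  ((Complex.I * ℏ) ^ k / ((k.factorial : ℂ) * 2 ^ k)) *
    ∑ i : Fin k → Fin n, ∑ j : Fin k → Fin n,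
      (∏ t, Λ (i t) (j t)) *
        (iterPd n (List.ofFn i) f u * iterPd n (List.ofFn j) g u)

/-- The `Λ`-product of two functions on `ℂⁿ` (pointwise sum of the series). -/
noncomputable def starMul (ℏ : ℝ) (n : ℕ) (Λ : Matrix (Fin n) (Fin n) ℂ)
    (f g : (Fin n → ℂ) → ℂ) : (Fin n → ℂ) → ℂ :=
  fun u => ∑' k : ℕ, starTerm ℏ n Λ f g u k

/-- The `K`-ordered expression of the star-exponential `e_*^{(1/(iℏ))⟨a,u⟩}`. -/
noncomputable def Efun (ℏ : ℝ) (n : ℕ) (K : Matrix (Fin n) (Fin n) ℂ)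
    (a : Fin n → ℂ) : (Fin n → ℂ) → ℂ :=
  fun u => Complex.exp ((1 / (4 * (Complex.I * ℏ))) * (∑ i, ∑ j, a i * K i j * a j) +
    (1 / (Complex.I * ℏ)) * ∑ i, a i * u i)

/- auxiliary -/
noncomputable def Gfun (ℏ : ℝ) (n : ℕ) (c : ℂ) (v : Fin n → ℂ) : (Fin n → ℂ) → ℂ :=
  fun u => Complex.exp (c + (1 / (Complex.I * ℏ)) * ∑ t, v t * u t)

noncomputable def Qbil (n : ℕ) (M : Matrix (Fin n) (Fin n) ℂ) (x y : Fin n → ℂ) : ℂ :=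
  ∑ i, ∑ j, x i * M i j * y j

lemma Efun_eq_G (ℏ : ℝ) (n : ℕ) (K : Matrix (Fin n) (Fin n) ℂ) (a : Fin n → ℂ) :
    Efun ℏ n K a = Gfun ℏ n ((1 / (4 * (Complex.I * ℏ))) * Qbil n K a a) a := rfl

lemma pd_smul_G (ℏ : ℝ) (n : ℕ) (s c : ℂ) (v : Fin n → ℂ) (i : Fin n) :
    pd n i (fun u => s * Gfun ℏ n c v u)
      = fun u => (s * ((1 / (Complex.I * ℏ)) * v i)) * Gfun ℏ n c v u := by
  funext u
  have hL : HasFDerivAt (fun u : Fin n → ℂ => ∑ t, v t * u t)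
      (∑ t, v t • (ContinuousLinearMap.proj t : (Fin n → ℂ) →L[ℂ] ℂ)) u := by
    have h : (fun u : Fin n → ℂ => ∑ t, v t * u t)
        = ⇑(∑ t, v t • (ContinuousLinearMap.proj t : (Fin n → ℂ) →L[ℂ] ℂ)) := by
      funext w; simp [ContinuousLinearMap.sum_apply]
    rw [h]; exact (∑ t, v t • (ContinuousLinearMap.proj t : (Fin n → ℂ) →L[ℂ] ℂ)).hasFDerivAt
  have h2 := (((hL.const_mul (1 / (Complex.I * ℏ))).const_add c).cexp.const_mul s)
  rw [pd]
  rw [show (fun u => s * Gfun ℏ n c v u)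
      = (fun u => s * Complex.exp (c + (1 / (Complex.I * ℏ)) * ∑ t, v t * u t)) from rfl]
  rw [h2.fderiv]
  simp only [ContinuousLinearMap.smul_apply, ContinuousLinearMap.sum_apply,
    ContinuousLinearMap.proj_apply, smul_eq_mul, Gfun]
  have h3 : ∑ t, v t * (Pi.single i 1 : Fin n → ℂ) t = v i := by
    simp [Pi.single_apply, mul_ite, Finset.sum_ite_eq']
  rw [h3]; ring

lemma iterPd_smul_G (ℏ : ℝ) (n : ℕ) (l : List (Fin n)) (s c : ℂ) (v : Fin n → ℂ) :
    iterPd n l (fun u => s * Gfun ℏ n c v u)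
      = fun u => (s * (l.map (fun x => (1 / (Complex.I * ℏ)) * v x)).prod) * Gfun ℏ n c v u := by
  induction l with
  | nil => simp [iterPd]
  | cons x l ih =>
    have : iterPd n (x :: l) (fun u => s * Gfun ℏ n c v u)
        = pd n x (iterPd n l (fun u => s * Gfun ℏ n c v u)) := rfl
    rw [this, ih, pd_smul_G]
    funext u; simp only [List.map_cons, List.prod_cons]; ring

lemma iterPd_G_ofFn (ℏ : ℝ) (n : ℕ) {k : ℕ} (i : Fin k → Fin n) (c : ℂ) (v : Fin n → ℂ) :
    iterPd n (List.ofFn i) (Gfun ℏ n c v)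
      = fun u => (∏ t, (1 / (Complex.I * ℏ)) * v (i t)) * Gfun ℏ n c v u := by
  have h := iterPd_smul_G ℏ n (List.ofFn i) 1 c v
  simp only [one_mul] at h
  rw [h]
  funext u
  rw [List.map_ofFn, List.prod_ofFn]
  rfl

lemma sum_fun_prod {k n : ℕ} (g : Fin k → Fin n → ℂ) :
    ∑ f : Fin k → Fin n, ∏ t, g t (f t) = ∏ t, ∑ x, g t x :=
  (Fintype.prod_sum g).symm

lemma starTerm_G (ℏ : ℝ) (hℏ : 0 < ℏ) (n : ℕ) (Λ : Matrix (Fin n) (Fin n) ℂ)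
    (c d : ℂ) (v w : Fin n → ℂ) (u : Fin n → ℂ) (k : ℕ) :
    starTerm ℏ n Λ (Gfun ℏ n c v) (Gfun ℏ n d w) u k
      = (((1 / (2 * (Complex.I * ℏ))) * Qbil n Λ v w) ^ k / (k.factorial : ℂ)) *
          (Gfun ℏ n c v u * Gfun ℏ n d w u) := by
  have hne : (Complex.I * (ℏ:ℂ)) ≠ 0 := by
    simp [Complex.I_ne_zero, Complex.ofReal_ne_zero, ne_of_gt hℏ]
  set F : Fin n → Fin n → ℂ := fun x y =>
    Λ x y * ((1 / (Complex.I * (ℏ:ℂ))) * v x) * ((1 / (Complex.I * (ℏ:ℂ))) * w y) with hF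
  rw [starTerm]
  have h1 : ∀ (i j : Fin k → Fin n),
      (∏ t, Λ (i t) (j t)) *
        (iterPd n (List.ofFn i) (Gfun ℏ n c v) u * iterPd n (List.ofFn j) (Gfun ℏ n d w) u)
      = (∏ t, F (i t) (j t)) * (Gfun ℏ n c v u * Gfun ℏ n d w u) := by
    intro i j
    rw [iterPd_G_ofFn, iterPd_G_ofFn]
    simp only [hF, Finset.prod_mul_distrib]
    ring
  simp only [h1]
  simp only [← Finset.sum_mul]
  have h2 : (∑ i : Fin k → Fin n, ∑ j : Fin k → Fin n, ∏ t, F (i t) (j t))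
      = (∑ x, ∑ y, F x y) ^ k := by
    have hin : ∀ i : Fin k → Fin n,
        ∑ j : Fin k → Fin n, ∏ t, F (i t) (j t) = ∏ t, ∑ y, F (i t) y :=
      fun i => sum_fun_prod (fun t y => F (i t) y)
    simp only [hin]
    rw [sum_fun_prod (fun _ x => ∑ y, F x y), Finset.prod_const, Finset.card_univ,
      Fintype.card_fin]
  rw [h2]
  have h3 : (∑ x, ∑ y, F x y)
      = (1 / (Complex.I * (ℏ:ℂ))) * (1 / (Complex.I * (ℏ:ℂ))) * Qbil n Λ v w := by
    simp only [hF, Qbil, Finset.mul_sum]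
    exact Finset.sum_congr rfl fun x _ => Finset.sum_congr rfl fun y _ => by ring
  rw [h3]
  have h4 : ((1:ℂ) / (2 * (Complex.I * (ℏ:ℂ)))) * Qbil n Λ v w
      = (Complex.I * (ℏ:ℂ)) *
          ((1 / (Complex.I * (ℏ:ℂ))) * (1 / (Complex.I * (ℏ:ℂ))) * Qbil n Λ v w) / 2 := by
    field_simp
  rw [h4]
  simp only [div_pow, mul_pow, one_div, inv_pow]
  ring

lemma starMul_G (ℏ : ℝ) (hℏ : 0 < ℏ) (n : ℕ) (Λ : Matrix (Fin n) (Fin n) ℂ)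
    (c d : ℂ) (v w : Fin n → ℂ) :
    starMul ℏ n Λ (Gfun ℏ n c v) (Gfun ℏ n d w)
      = Gfun ℏ n (c + d + (1 / (2 * (Complex.I * ℏ))) * Qbil n Λ v w) (v + w) := by
  funext u
  rw [starMul]
  simp only [starTerm_G ℏ hℏ n Λ c d v w u]
  rw [tsum_mul_right]
  have hexp : (∑' k : ℕ, ((1 / (2 * (Complex.I * (ℏ:ℂ)))) * Qbil n Λ v w) ^ k / (k.factorial : ℂ))
      = Complex.exp ((1 / (2 * (Complex.I * (ℏ:ℂ)))) * Qbil n Λ v w) := by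
    rw [Complex.exp_eq_exp_ℂ, NormedSpace.exp_eq_tsum_div]
  rw [hexp]
  simp only [Gfun]
  rw [← Complex.exp_add, ← Complex.exp_add]
  congr 1
  have hsum : ∑ t, (v + w) t * u t = (∑ t, v t * u t) + ∑ t, w t * u t := by
    rw [← Finset.sum_add_distrib]
    exact Finset.sum_congr rfl fun t _ => by simp [add_mul]
  rw [hsum]
  ring

lemma Qbil_add_matrix (n : ℕ) (K J : Matrix (Fin n) (Fin n) ℂ) (x y : Fin n → ℂ) :
    Qbil n (K + J) x y = Qbil n K x y + Qbil n J x y := by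
  simp [Qbil, Matrix.add_apply, mul_add, add_mul, Finset.sum_add_distrib]

lemma Qbil_neg_left (n : ℕ) (M : Matrix (Fin n) (Fin n) ℂ) (x y : Fin n → ℂ) :
    Qbil n M (-x) y = -Qbil n M x y := by
  simp [Qbil, Finset.sum_neg_distrib]

lemma Qbil_neg_right (n : ℕ) (M : Matrix (Fin n) (Fin n) ℂ) (x y : Fin n → ℂ) :
    Qbil n M x (-y) = -Qbil n M x y := by
  simp [Qbil, Finset.sum_neg_distrib]

lemma Qbil_add_left (n : ℕ) (M : Matrix (Fin n) (Fin n) ℂ) (x x' y : Fin n → ℂ) :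
    Qbil n M (x + x') y = Qbil n M x y + Qbil n M x' y := by
  simp [Qbil, add_mul, Finset.sum_add_distrib]

lemma Qbil_symm (n : ℕ) {M : Matrix (Fin n) (Fin n) ℂ} (hM : Mᵀ = M) (x y : Fin n → ℂ) :
    Qbil n M x y = Qbil n M y x := by
  rw [Qbil, Qbil, Finset.sum_comm]
  refine Finset.sum_congr rfl fun i _ => Finset.sum_congr rfl fun j _ => ?_
  have h3 := congrFun (congrFun hM j) i
  rw [Matrix.transpose_apply] at h3
  rw [← h3]; ring

lemma Qbil_skew (n : ℕ) {M : Matrix (Fin n) (Fin n) ℂ} (hM : Mᵀ = -M) (x y : Fin n → ℂ) :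
    Qbil n M x y = -Qbil n M y x := by
  rw [Qbil, Qbil, Finset.sum_comm, ← Finset.sum_neg_distrib]
  refine Finset.sum_congr rfl fun i _ => ?_
  rw [← Finset.sum_neg_distrib]
  refine Finset.sum_congr rfl fun j _ => ?_
  have : M j i = -M i j := by
    have := congrFun (congrFun hM i) j
    simpa [Matrix.transpose_apply] using this
  rw [this]; ring

theorem statement16 (n : ℕ) (hn : 1 ≤ n) (ℏ : ℝ) (hℏ : 0 < ℏ)
    (K J : Matrix (Fin n) (Fin n) ℂ) (hK : Kᵀ = K) (hJ : Jᵀ = -J)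
    (a b : Fin n → ℂ) :
    -- the multiplicative commutator E(−b) * E(−a) * E(b) * E(a) is the constant
    -- exp((1/(iℏ))·bJaᵀ), independent of the expression parameter K
    starMul ℏ n (K + J)
        (starMul ℏ n (K + J)
          (starMul ℏ n (K + J) (Efun ℏ n K (-b)) (Efun ℏ n K (-a)))
          (Efun ℏ n K b))
        (Efun ℏ n K a)
      = fun _ => Complex.exp ((1 / (Complex.I * ℏ)) * ∑ i, ∑ j, b i * J i j * a j) := by
  have hI : (Complex.I : ℂ) ≠ 0 := Complex.I_ne_zero
  have hh : ((ℏ : ℂ)) ≠ 0 := Complex.ofReal_ne_zero.mpr (ne_of_gt hℏ)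
  have hJbb : Qbil n J b b = 0 := by
    have h := Qbil_skew n hJ b b
    linear_combination h / 2
  have hJaa : Qbil n J a a = 0 := by
    have h := Qbil_skew n hJ a a
    linear_combination h / 2
  rw [Efun_eq_G, Efun_eq_G, Efun_eq_G, Efun_eq_G]
  rw [starMul_G ℏ hℏ, starMul_G ℏ hℏ, starMul_G ℏ hℏ]
  have hv : (-b + -a + b + a : Fin n → ℂ) = 0 := by funext i; simp
  rw [hv]
  have e1 : Qbil n K (-b) (-b) = Qbil n K b b := by
    rw [Qbil_neg_left, Qbil_neg_right]; ring
  have e2 : Qbil n K (-a) (-a) = Qbil n K a a := by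
    rw [Qbil_neg_left, Qbil_neg_right]; ring
  have e3 : Qbil n (K + J) (-b) (-a) = Qbil n K b a + Qbil n J b a := by
    rw [Qbil_add_matrix, Qbil_neg_left, Qbil_neg_left, Qbil_neg_right, Qbil_neg_right]; ring
  have e4 : Qbil n (K + J) (-b + -a) b = -Qbil n K b b - Qbil n K b a + Qbil n J b a := by
    rw [Qbil_add_matrix, Qbil_add_left, Qbil_add_left, Qbil_neg_left, Qbil_neg_left,
      Qbil_neg_left, Qbil_neg_left, Qbil_symm n hK a b, Qbil_skew n hJ a b, hJbb]
    ring
  have hw : (-b + -a + b : Fin n → ℂ) = -a := by funext i; simp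
  have e5 : Qbil n (K + J) (-b + -a + b) a = -Qbil n K a a := by
    rw [hw, Qbil_add_matrix, Qbil_neg_left, Qbil_neg_left, hJaa]
    ring
  rw [e1, e2, e3, e4, e5]
  have hRHS : (∑ i, ∑ j, b i * J i j * a j) = Qbil n J b a := rfl
  rw [hRHS]
  funext u
  simp only [Gfun, Pi.zero_apply, zero_mul, Finset.sum_const_zero, mul_zero, add_zero]
  congr 1
  ring
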